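/- (Soundness of leftmost linear reduction) If M →_ll N, i.e. N is obtained from M by one step of leftmost linear reduction, then M and N are β-equivalent. -/

import Mathlib

set_option maxHeartbeats 1000000

namespace ULC

/-- Variable names. -/
abbrev Name := Nat
/-- Positions (directed paths) in trees / terms. -/
abbrev Pos := List Nat

/-! ## Untyped lambda terms `Λ ::= x | (Λ Λ) | λx.Λ` -/

inductive Term where
  | var : Name → Term
  | app : Term → Term → Term
  | lam : Name → Term → Term
deriving DecidableEq

namespace Term

/-- Free variables of a term. -/
def fv : Term → List Name
  | var x => [x]
  | app u v => fv u ++ fv v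
  | lam x u => (fv u).filter (· != x)

def size : Term → Nat
  | var _ => 1
  | app u v => size u + size v + 1
  | lam _ u => size u + 1

/-- Naive renaming of a free variable (used only with a fresh target). -/
def rename (y z : Name) : Term → Term
  | var w => var (if w = y then z else w)
  | app u v => app (rename y z u) (rename y z v)
  | lam w u => if w = y then lam w u else lam w (rename y z u)

theorem size_rename (y z : Name) : ∀ t : Term, (t.rename y z).size = t.size := by
  intro t
  induction t with
  | var w => simp [rename, size]
  | app u v ihu ihv => simp [rename, size, ihu, ihv]
  | lam w u ih => by_cases h : w = y <;> simp [rename, size, h, ih]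

/-- A name fresh for a given list of names. -/
def fresh (l : List Name) : Name := l.foldr max 0 + 1

/-- Capture-avoiding substitution `subst x s t = t[x := s]`. -/
def subst (x : Name) (s : Term) : Term → Term
  | var y => if y = x then s else var y
  | app u v => app (subst x s u) (subst x s v)
  | lam y u =>
      if y = x then lam y u
      else if y ∈ s.fv ∧ x ∈ u.fv then
        let z := fresh (s.fv ++ u.fv ++ [x, y])
        lam z (subst x s (u.rename y z))
      else lam y (subst x s u)
termination_by t => t.size
decreasing_by
  all_goals simp only [size, size_rename]
  all_goals omega

end Term

/-! ## Beta reduction, alpha conversion -/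

/-- One step of β-reduction. -/
inductive Beta : Term → Term → Prop where
  | redex (x : Name) (u v : Term) :
      Beta (.app (.lam x u) v) (Term.subst x v u)
  | appL {u u' : Term} (v : Term) : Beta u u' → Beta (.app u v) (.app u' v)
  | appR (u : Term) {v v' : Term} : Beta v v' → Beta (.app u v) (.app u v')
  | lamC (x : Name) {u u' : Term} : Beta u u' → Beta (.lam x u) (.lam x u')

/-- α-equivalence. -/
inductive Alpha : Term → Term → Prop where
  | var (x : Name) : Alpha (.var x) (.var x)
  | app {u u' v v' : Term} :
      Alpha u u' → Alpha v v' → Alpha (.app u v) (.app u' v')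
  | lam {x y : Name} {u u' : Term} :
      (∀ z, z ∉ u.fv → z ∉ u'.fv → Alpha (u.rename x z) (u'.rename y z)) →
      Alpha (.lam x u) (.lam y u')

/-- Many-step β-reduction. -/
def BetaStar : Term → Term → Prop := Relation.ReflTransGen Beta

/-- β-equivalence (as usual in the named λ-calculus, modulo α-conversion). -/
def BetaEq : Term → Term → Prop :=
  Relation.EqvGen (fun a b => Beta a b ∨ Alpha a b)

/-- β-normal form: no redex, i.e. no β-step possible. -/
def IsBetaNormal (t : Term) : Prop := ∀ u, ¬ Beta t u

/-- `t` has a β-normal form. -/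
def HasBnf (t : Term) : Prop := ∃ n, BetaStar t n ∧ IsBetaNormal n

/-! ## Head lambda-list, generalized redexes, lloc -/

namespace Term

/-- The head lambda-list `λ_l`. -/
def lamList : Term → List Name
  | var _ => []
  | lam x u => x :: lamList u
  | app u _ => (lamList u).tail

/-- Subterm at a position (0 = under a λ or operator of an app, 1 = operand). -/
def subtermAt : Term → Pos → Option Term
  | t, [] => some t
  | lam _ u, 0 :: p => subtermAt u p
  | app u _, 0 :: p => subtermAt u p
  | app _ v, 1 :: p => subtermAt v p
  | _, _ => none

/-- Replace the subterm at a position. -/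
def replaceAt : Term → Pos → Term → Term
  | _, [], s => s
  | lam x u, 0 :: p, s => lam x (replaceAt u p s)
  | app u v, 0 :: p, s => app (replaceAt u p s) v
  | app u v, 1 :: p, s => app u (replaceAt v p s)
  | t, _, _ => t

/-- Positions of the abstractions listed in the head lambda-list. -/
def lamListPos : Term → List Pos
  | var _ => []
  | lam _ u => ([] : Pos) :: (lamListPos u).map (fun q => 0 :: q)
  | app u _ => ((lamListPos u).map (fun q => 0 :: q)).tail

/-- Generalized redexes: pairs (position of the λ-abstraction occurrence,
position of its argument). -/
def gr : Term → List (Pos × Pos)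
  | var _ => []
  | lam _ u => (gr u).map (fun r => (0 :: r.1, 0 :: r.2))
  | app u v =>
      (match lamListPos u with
        | [] => []
        | q :: _ => [((0 :: q : Pos), ([1] : Pos))]) ++
      (gr u).map (fun r => (0 :: r.1, 0 :: r.2)) ++
      (gr v).map (fun r => (1 :: r.1, 1 :: r.2))

/-- Position of the binder of the variable occurrence at `p` (if bound). -/
def binderAux : Term → Pos → Pos → List (Name × Pos) → Option Pos
  | var x, [], _, env => env.lookup x
  | lam y u, 0 :: p, cur, env => binderAux u p (cur ++ [0]) ((y, cur) :: env)
  | app u _, 0 :: p, cur, env => binderAux u p (cur ++ [0]) env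
  | app _ v, 1 :: p, cur, env => binderAux v p (cur ++ [1]) env
  | _, _, _, _ => none

def binderOf (M : Term) (p : Pos) : Option Pos := binderAux M p [] []

/-- The variable occurrence at `p` is involved in a generalized redex of `M`. -/
def involvedB (M : Term) (p : Pos) : Bool :=
  M.gr.any (fun r => binderOf M p == some r.1)

def Involved (M : Term) (p : Pos) : Prop := involvedB M p = true

/-- The leftmost linear occurrence `lloc`. -/
def llocAux (M : Term) : Term → Pos → Option Pos
  | var _, p => if involvedB M p then some p else none
  | lam _ u, p => llocAux M u (p ++ [0])
  | app u v, p =>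
      match llocAux M u (p ++ [0]) with
      | some q => some q
      | none => if u.lamList = [] then llocAux M v (p ++ [1]) else none

def lloc (M : Term) : Option Pos := llocAux M M []

end Term

/-- Quasi normal form: no leftmost linear occurrence. -/
def Qnf (M : Term) : Prop := M.lloc = none

/-- Names bound somewhere in the term. -/
def Term.bndrs : Term → List Name
  | .var _ => []
  | .app u v => u.bndrs ++ v.bndrs
  | .lam x u => x :: u.bndrs

/-- Barendregt convention: binder names are pairwise distinct and disjoint
from the free names. -/
def Barendregt (M : Term) : Prop :=
  M.bndrs.Nodup ∧ ∀ x ∈ M.bndrs, x ∉ M.fv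

/-- One step of leftmost linear reduction: linearly fire the generalized
redex involving the lloc (working up to α-conversion, which realizes the
capture-avoiding renaming). -/
def LinStep (M N : Term) : Prop :=
  ∃ M', Alpha M M' ∧ Barendregt M' ∧
    ∃ p lp ap A, M'.lloc = some p ∧ Term.binderOf M' p = some lp ∧
      (lp, ap) ∈ M'.gr ∧ Term.subtermAt M' ap = some A ∧
      Alpha N (Term.replaceAt M' p A)

/-- Firing a trivial redex `(λx.u)A` with `x ∉ fv u`. -/
def TrivStep (M N : Term) : Prop :=
  ∃ p x u A, Term.subtermAt M p = some (.app (.lam x u) A) ∧ x ∉ u.fv ∧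
    N = Term.replaceAt M p u

def IsRedexAt (M : Term) (p : Pos) : Prop :=
  ∃ x u A, Term.subtermAt M p = some (.app (.lam x u) A)

def HasRedex (M : Term) : Prop := ∃ p, IsRedexAt M p

/-- `q` occurs (strictly) to the left of `p`. -/
def PosLeft (q p : Pos) : Prop :=
  (∃ r a b s₁ s₂, q = r ++ a :: s₁ ∧ p = r ++ b :: s₂ ∧ a < b) ∨
  (q ≠ p ∧ q <+: p)

/-- A spinal-innermost redex: a β-redex whose operator body has no redex. -/
def SpinalInnermostAt (M : Term) (p : Pos) : Prop :=
  ∃ x u A, Term.subtermAt M p = some (.app (.lam x u) A) ∧ ¬ HasRedex u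

/-- The leftmost spinal-innermost redex of `M` is at `p`. -/
def LSIAt (M : Term) (p : Pos) : Prop :=
  SpinalInnermostAt M p ∧ ∀ q, SpinalInnermostAt M q → ¬ PosLeft q p

/-- One step of the leftmost spinal-innermost reduction strategy. -/
def LSIStep (M N : Term) : Prop :=
  ∃ p x u A, LSIAt M p ∧ Term.subtermAt M p = some (.app (.lam x u) A) ∧
    N = Term.replaceAt M p (Term.subst x A u)

/-! ## Head occurrence, hoc arguments, head reduction -/

/-- Position of the head (leftmost) variable occurrence. -/
def Term.hocPos : Term → Pos
  | .var _ => []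
  | .lam _ u => 0 :: u.hocPos
  | .app u _ => 0 :: u.hocPos

/-- Quasi-head-normal form: the hoc is not involved in a generalized redex. -/
def Qhnf (M : Term) : Prop := ¬ Term.Involved M M.hocPos

/-- The arguments of the head variable occurrence. -/
def Term.args : Term → List Term
  | .var _ => []
  | .lam _ u => u.args
  | .app u v => if u.lamList = [] then u.args ++ [v] else u.args

def Term.headIsVar : Term → Prop
  | .var _ => True
  | .app u _ => u.headIsVar
  | .lam _ _ => False

/-- Head normal form `λ x₁…xₙ. y A₁ … A_m`. -/
def IsHnf : Term → Prop
  | .var _ => True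
  | .app u _ => u.headIsVar
  | .lam _ u => IsHnf u

/-- One step of head reduction. -/
inductive HeadStep : Term → Term → Prop where
  | redex (x : Name) (u v : Term) :
      HeadStep (.app (.lam x u) v) (Term.subst x v u)
  | lamC (x : Name) {u u' : Term} : HeadStep u u' → HeadStep (.lam x u) (.lam x u')
  | appL {u u' : Term} (v : Term) :
      (∀ y w, u ≠ .lam y w) → HeadStep u u' → HeadStep (.app u v) (.app u' v)

/-- Number of arguments applied to the head variable. -/
def Term.headArgCount : Term → Nat
  | .var _ => 0
  | .lam _ u => u.headArgCount
  | .app u _ => u.headArgCount + 1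

/-! ## Simple types and eta-long forms -/

inductive Ty where
  | base : Ty
  | arrow : Ty → Ty → Ty
deriving DecidableEq

mutual
/-- `ELong Γ M A`: `M` is a simply-typed term in η-long form of type `A`. -/
inductive ELong : List (Name × Ty) → Term → Ty → Prop where
  | arrow {Γ x A B U} : ELong ((x, A) :: Γ) U B → ELong Γ (.lam x U) (.arrow A B)
  | base {Γ M} : ESpine Γ M .base → ELong Γ M .base

/-- Spines: a head (variable or abstraction) applied to η-long arguments. -/
inductive ESpine : List (Name × Ty) → Term → Ty → Prop where
  | var {Γ x A} : Γ.lookup x = some A → ESpine Γ (.var x) A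
  | head {Γ x U A B} : ELong Γ (.lam x U) (.arrow A B) → ESpine Γ (.lam x U) (.arrow A B)
  | app {Γ U V A B} : ESpine Γ U (.arrow A B) → ELong Γ V A → ESpine Γ (.app U V) B
end

/-! ## Computation trees -/

/-- Node kinds of the computation tree. -/
inductive NKind where
  | lam | var | app
deriving DecidableEq

/-- Node labels of the computation tree. -/
inductive NLabel where
  | lam : List Name → NLabel
  | var : Name → NLabel
  | app : NLabel
deriving DecidableEq

/-- Computation trees: bulk λ-nodes (with one child), variable nodes (with
λ-node children) and @-nodes (operator + operand λ-node children). -/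
inductive CT where
  | lam : List Name → CT → CT
  | var : Name → List CT → CT
  | app : CT → List CT → CT

instance : Inhabited CT := ⟨.var 0 []⟩

namespace CT

def kind : CT → NKind
  | .lam _ _ => .lam
  | .var _ _ => .var
  | .app _ _ => .app

def labelOf : CT → NLabel
  | .lam xs _ => .lam xs
  | .var z _ => .var z
  | .app _ _ => .app

/-- Arity of a node: number of bound variables / children / operands. -/
def arity : CT → Nat
  | .lam xs _ => xs.length
  | .var _ cs => cs.length
  | .app _ cs => cs.length

/-- The subtree rooted at a given path.  A λ-node's unique child has index 1;
the operator of an @-node has index 0 and its operands indices 1,…; the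
children of a variable node have indices 1,…. -/
def nodeAt : CT → Pos → Option CT
  | t, [] => some t
  | .lam _ c, 1 :: p => nodeAt c p
  | .var _ cs, (k + 1) :: p =>
      match cs[k]? with
      | some c => nodeAt c p
      | none => none
  | .app op _, 0 :: p => nodeAt op p
  | .app _ cs, (k + 1) :: p =>
      match cs[k]? with
      | some c => nodeAt c p
      | none => none
  | _, _ => none

end CT

mutual
def namesCT : CT → List Name
  | .lam xs c => xs ++ namesCT c
  | .var z cs => z :: namesL cs
  | .app op cs => namesCT op ++ namesL cs
def namesL : List CT → List Name
  | [] => []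
  | c :: cs => namesCT c ++ namesL cs
end

mutual
def freeNamesCT : CT → List Name
  | .lam xs c => (freeNamesCT c).filter (fun z => ! xs.contains z)
  | .var z cs => z :: freeNamesL cs
  | .app op cs => freeNamesCT op ++ freeNamesL cs
def freeNamesL : List CT → List Name
  | [] => []
  | c :: cs => freeNamesCT c ++ freeNamesL cs
end

/-- Canonical enumeration of the free variables of the tree. -/
def freeListCT (T : CT) : List Name := (freeNamesCT T).dedup

/-! ### The computation tree of a term -/

mutual
/-- The body node (variable or @) of the computation tree of a term. -/
def ctreeB : Term → CT
  | .var z => .var z []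
  | .lam x u =>
      .app (match ctreeL u with
            | .lam xs c => CT.lam (x :: xs) c
            | c => CT.lam [x] c) []
  | .app u v =>
      match ctreeB u with
      | .var z cts => .var z (cts ++ [ctreeL v])
      | .app op cts => .app op (cts ++ [ctreeL v])
      | c => c
termination_by t => 2 * t.size
decreasing_by all_goals (simp only [Term.size]; omega)
/-- The computation tree of a term (rooted at a bulk λ-node). -/
def ctreeL : Term → CT
  | .lam x u =>
      match ctreeL u with
      | .lam xs c => .lam (x :: xs) c
      | c => .lam [x] c
  | .var z => .lam [] (.var z [])
  | .app u v => .lam [] (ctreeB (.app u v))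
termination_by t => 2 * t.size + 1
decreasing_by all_goals (simp only [Term.size]; omega)
end

def ctree (M : Term) : CT := ctreeL M

/-! ### Binders in the computation tree -/

/-- `binderGo` walks a path maintaining the binding environment; returns the
(binder position, binding index) of the variable node at the end of the path. -/
def binderGo : CT → Pos → Pos → List (Name × (Pos × Nat)) → Option (Pos × Nat)
  | .var z _, [], _, env => env.lookup z
  | .lam xs c, 1 :: p, cur, env =>
      binderGo c p (cur ++ [1])
        ((((xs.zipIdx.map Prod.swap).map (fun e => (e.2, (cur, e.1 + 1)))).reverse) ++ env)
  | .var _ cs, (k + 1) :: p, cur, env =>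
      match cs[k]? with
      | some c => binderGo c p (cur ++ [k + 1]) env
      | none => none
  | .app op _, 0 :: p, cur, env => binderGo op p (cur ++ [0]) env
  | .app _ cs, (k + 1) :: p, cur, env =>
      match cs[k]? with
      | some c => binderGo c p (cur ++ [k + 1]) env
      | none => none
  | _, _, _, _ => none

/-- Binder (with binding index) of a variable node in the computation tree. -/
def binderInCT (T : CT) (q : Pos) : Option (Pos × Nat) := binderGo T q [] []

/-! ### Generalized redexes at the level of computation trees -/

def seqPre (k : Nat) (l : List (Pos × Nat)) : List (Pos × Nat) :=
  l.map (fun s => (k :: s.1, s.2))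

/-- The slots (binder position, binding index) of the head lambda-list. -/
def ctLamSlots : CT → List (Pos × Nat)
  | .lam xs c =>
      (List.range xs.length).map (fun j => (([] : Pos), j + 1))
        ++ seqPre 1 (ctLamSlots c)
  | .var _ _ => []
  | .app op cs => (seqPre 0 (ctLamSlots op)).drop cs.length

def preRedex (k : Nat) (l : List ((Pos × Nat) × (Pos × Nat))) :
    List ((Pos × Nat) × (Pos × Nat)) :=
  l.map (fun r => ((k :: r.1.1, r.1.2), (k :: r.2.1, r.2.2)))

mutual
/-- Generalized redexes of a computation tree: pairs of a lambda slot
(binder position, binding index) and an argument (position of the @-node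
where it is consumed, operand index). -/
def ctGr : CT → List ((Pos × Nat) × (Pos × Nat))
  | .lam _ c => preRedex 1 (ctGr c)
  | .var _ cs => ctGrL 1 cs
  | .app op cs =>
      ((((seqPre 0 (ctLamSlots op)).take cs.length).zipIdx.map Prod.swap).map
        (fun e => (e.2, (([] : Pos), e.1 + 1))))
      ++ preRedex 0 (ctGr op) ++ ctGrL 1 cs
def ctGrL : Nat → List CT → List ((Pos × Nat) × (Pos × Nat))
  | _, [] => []
  | k, c :: cs => preRedex k (ctGr c) ++ ctGrL (k + 1) cs
end

/-- The variable node at `q` is involved in a generalized redex of `T`. -/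
def involvedCT (T : CT) (q : Pos) : Bool :=
  match binderInCT T q with
  | some bi => (ctGr T).any (fun r => r.1 == bi)
  | none => false

/-- Length of the head lambda-list of (the term denoted by) a tree. -/
def ctLamLen : CT → Nat
  | .lam xs c => xs.length + ctLamLen c
  | .var _ _ => 0
  | .app op cs => ctLamLen op - cs.length

mutual
/-- The lloc of the subtree `t` of `T` located at absolute position `q`
(involvement is computed with respect to the whole tree `T`). -/
def llocCT (T : CT) : CT → Pos → Option Pos
  | .lam _ c, q => llocCT T c (q ++ [1])
  | .var _ cs, q =>
      if involvedCT T q then some q else llocArgs T cs q 0 1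
  | .app op cs, q =>
      match llocCT T op (q ++ [0]) with
      | some r => some r
      | none => llocArgs T cs q (ctLamLen op) 1
def llocArgs (T : CT) : List CT → Pos → Nat → Nat → Option Pos
  | [], _, _, _ => none
  | a :: rest, q, l, k =>
      if l = 0 then
        match llocCT T a (q ++ [k]) with
        | some r => some r
        | none => llocArgs T rest q 0 (k + 1)
      else llocArgs T rest q (l - 1) (k + 1)
end

/-- The lloc of the subterm rooted at node `p` of the tree `T`. -/
def llocNode (T : CT) (p : Pos) : Option Pos :=
  match T.nodeAt p with
  | some sub => llocCT T sub p
  | none => none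
/-! ## Extended nodes: structural nodes and ghost nodes -/

/-- Extended nodes: structural nodes (paths of the computation tree) and
ghost nodes, determined by their enabler and a label `k` exceeding its arity. -/
inductive ENode where
  | s : Pos → ENode
  | g : ENode → Nat → ENode
deriving DecidableEq

instance : Inhabited ENode := ⟨.s []⟩

def kindAt (T : CT) (p : Pos) : Option NKind := (T.nodeAt p).map CT.kind

def arityAt (T : CT) (p : Pos) : Nat := ((T.nodeAt p).map CT.arity).getD 0

/-- Bound variables of the λ-node at `p`. -/
def boundAt (T : CT) (p : Pos) : List Name :=
  match T.nodeAt p with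
  | some (.lam xs _) => xs
  | _ => []

namespace ENode

/-- Kind of an extended node (ghosts alternate kinds with their enabler). -/
def kindIn (T : CT) : ENode → Option NKind
  | .s p => kindAt T p
  | .g e _ =>
      match e.kindIn T with
      | some .lam => some .var
      | some _ => some .lam
      | none => none

/-- Arity of an extended node (ghost nodes have arity 0). -/
def arityIn (T : CT) : ENode → Nat
  | .s p => arityAt T p
  | .g _ _ => 0

def isGhost : ENode → Bool
  | .s _ => false
  | .g _ _ => true

end ENode

/-- The unique enabler of a structural node: λ-nodes are enabled by their
parent (with the child index as label), variable nodes by their binder (with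
the binding index) or by the root (with a label indexing the free variable
beyond the root's arity); @-nodes have no enabler. -/
def enablerF (T : CT) (p : Pos) : Option (Pos × Nat) :=
  match T.nodeAt p with
  | none => none
  | some (.app _ _) => none
  | some (.lam _ _) =>
      if h : p = [] then none else some (p.dropLast, p.getLast h)
  | some (.var z _) =>
      match binderInCT T p with
      | some b => some b
      | none => some (([] : Pos), arityAt T [] + 1 + (freeListCT T).idxOf z)

/-- Structural enabling relation `bp ⊢_k q`. -/
def EnablesS (T : CT) (bp : Pos) (k : Nat) (q : Pos) : Prop :=
  (q = bp ++ [k] ∧ (T.nodeAt q).isSome = true ∧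
    (kindAt T bp = some .var ∨ kindAt T bp = some .app))
  ∨ (kindAt T q = some .var ∧ binderInCT T q = some (bp, k))
  ∨ (binderInCT T q = none ∧ bp = [] ∧
      ∃ z cs, T.nodeAt q = some (.var z cs) ∧
        k = arityAt T [] + 1 + (freeListCT T).idxOf z)

def extPB (T : CT) : Nat → Pos → Bool
  | 0, _ => false
  | fuel + 1, p =>
      if p = [] then true
      else
        match enablerF T p with
        | none => false
        | some (q, _) => extPB T fuel q

/-- External nodes: hereditarily enabled by the root. -/
def ENode.extIn (T : CT) : ENode → Bool
  | .s p => extPB T (p.length + 1) p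
  | .g e _ => e.extIn T

/-! ## Justified sequences of nodes

A justified sequence is represented as a list of occurrences in **reverse
chronological order** (the head of the list is the last occurrence).  Each
occurrence carries a pointer given by a distance `dist` (`0` = no pointer)
and a label `jlab`, together with a list `pend` of *pending lambdas*. -/

structure Occ where
  node : ENode
  dist : Nat
  jlab : Nat
  pend : List Name
deriving DecidableEq

instance : Inhabited Occ := ⟨⟨.s [], 0, 0, []⟩⟩

/-- The occurrence of the root of the tree. -/
def rootOcc : Occ := ⟨.s [], 0, 0, []⟩

/-- Indices (into the reversed sequence) of the occurrences retained by the
P-view. -/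
def pviewIdx (T : CT) : List Occ → List Nat
  | [] => []
  | o :: s =>
      if o.node.kindIn T = some .lam then
        if o.dist = 0 then [0]
        else 0 :: o.dist :: ((pviewIdx T (s.drop o.dist)).map (fun i => i + o.dist + 1))
      else 0 :: (pviewIdx T s).map (fun i => i + 1)
termination_by s => s.length
decreasing_by
  all_goals simp [List.length_drop]
  all_goals omega

/-- Indices of the occurrences retained by the O-view. -/
def oviewIdx (T : CT) : List Occ → List Nat
  | [] => []
  | o :: s =>
      if o.node.kindIn T = some .lam then 0 :: (oviewIdx T s).map (fun i => i + 1)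
      else
        if o.dist = 0 then [0]
        else 0 :: o.dist :: ((oviewIdx T (s.drop o.dist)).map (fun i => i + o.dist + 1))
termination_by s => s.length
decreasing_by
  all_goals simp [List.length_drop]
  all_goals omega

/-- Extract the subsequence of `s` given by indices (with pending-lambda
data), recomputing justification pointers within the subsequence. -/
def extractK (s : List Occ) (ks : List (Nat × List Name)) (setPend : Bool) :
    List Occ :=
  let idxs := ks.map Prod.fst
  (ks.zipIdx.map Prod.swap).map (fun e =>
    let a := e.1
    let i := e.2.1
    let o := (s[i]?).getD default
    let d :=
      if o.dist = 0 then 0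
      else
        let b := idxs.idxOf (i + o.dist)
        if b < idxs.length ∧ a < b then b - a else 0
    { o with dist := d, pend := if setPend then e.2.2 else o.pend })

/-- The P-view of a justified sequence. -/
def pview (T : CT) (s : List Occ) : List Occ :=
  extractK s ((pviewIdx T s).map (fun i => (i, ([] : List Name)))) false

/-- The O-view of a justified sequence. -/
def oview (T : CT) (s : List Occ) : List Occ :=
  extractK s ((oviewIdx T s).map (fun i => (i, ([] : List Name)))) false

/-- Follow justification pointers from index `i`; returns the index of the
final pointer-less occurrence. -/
def chainEnd (s : List Occ) : Nat → Nat → Option Nat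
  | 0, _ => none
  | fuel + 1, i =>
      match s[i]? with
      | none => none
      | some o => if o.dist = 0 then some i else chainEnd s fuel (i + o.dist)

def herEnd (s : List Occ) (i : Nat) : Option Nat := chainEnd s s.length i

/-- The occurrence at index `i` is hereditarily justified by the root. -/
def HerRoot (s : List Occ) (i : Nat) : Prop :=
  ∃ j o, herEnd s i = some j ∧ s[j]? = some o ∧ o.node = ENode.s []

/-- The occurrence at index `i` is hereditarily justified by an @-node. -/
def HerApp (T : CT) (s : List Occ) (i : Nat) : Prop :=
  ∃ j o, herEnd s i = some j ∧ s[j]? = some o ∧ o.node.kindIn T = some .app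

/-! ## Arity threshold -/

/-- Auxiliary computation of the arity threshold along the last strand. -/
def athZ (T : CT) : List Occ → Int → Int
  | nq :: aq :: rest, acc =>
      if aq.node.extIn T then 0
      else
        max ((nq.node.arityIn T : Int) + acc)
            (athZ T rest (acc + (nq.node.arityIn T : Int) - (aq.node.arityIn T : Int)))
  | _, _ => 0

/-- The arity threshold of a traversal ending with an external variable. -/
def ath (T : CT) (s : List Occ) : Nat := (athZ T s 0).toNat

/-! ## Imaginary traversals (Table 1) and their restrictions -/

/-- Configuration selecting the variants of the traversal rules. -/
structure TravCfg where
  branch : Bool   -- rule IVar restricted to justifier = last occurrence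
  bound : Bool    -- rule IVar label bounded by the arity threshold
  etaVar : Bool   -- eta-expanded subcase of rule Var allowed
  etaIVar : Bool  -- eta-expanded subcase of rule IVar allowed
  ghostLam : Bool -- rule Lam^ghost allowed

/-- The traversal rules (Table 1 of the paper, and its restrictions). -/
inductive TravR (T : CT) (cfg : TravCfg) : List Occ → Prop where
  | root : TravR T cfg [rootOcc]
  | app {s : List Occ} {o : Occ} {p : Pos} :
      TravR T cfg (o :: s) →
      o.node = .s p → kindAt T p = some .app →
      TravR T cfg (⟨.s (p ++ [0]), 1, 0, []⟩ :: o :: s)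
  | lamApp {s : List Occ} {o : Occ} {p : Pos} :
      TravR T cfg (o :: s) →
      o.node = .s p → kindAt T p = some .lam →
      kindAt T (p ++ [1]) = some .app →
      TravR T cfg (⟨.s (p ++ [1]), 0, 0, []⟩ :: o :: s)
  | lamVar {s : List Occ} {o j : Occ} {p bp : Pos} {d k : Nat} :
      TravR T cfg (o :: s) →
      o.node = .s p → kindAt T p = some .lam →
      kindAt T (p ++ [1]) = some .var →
      1 ≤ d → (o :: s)[d - 1]? = some j → j.node = .s bp →
      EnablesS T bp k (p ++ [1]) →
      (d - 1) ∈ pviewIdx T (o :: s) →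
      TravR T cfg (⟨.s (p ++ [1]), d, k, []⟩ :: o :: s)
  | lamGhost {s : List Occ} {gl n a : Occ} :
      cfg.ghostLam = true →
      TravR T cfg (gl :: s) →
      gl.node.isGhost = true → gl.node.kindIn T = some .lam →
      1 ≤ gl.dist → s[gl.dist - 1]? = some n → s[gl.dist]? = some a →
      n.node.kindIn T = some .var → a.node.kindIn T = some .lam →
      TravR T cfg
        (⟨.g a.node (a.node.arityIn T + gl.jlab - n.node.arityIn T),
          gl.dist + 2, a.node.arityIn T + gl.jlab - n.node.arityIn T, []⟩ :: gl :: s)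
  | varC {s : List Occ} {n a m : Occ} {q : Pos} :
      TravR T cfg (n :: s) →
      n.node.kindIn T = some .var →
      HerApp T (n :: s) 0 →
      1 ≤ n.dist → 1 ≤ n.jlab →
      s[n.dist - 1]? = some a → a.node.kindIn T = some .lam →
      s[n.dist]? = some m →
      (m.node.kindIn T = some .var ∨ m.node.kindIn T = some .app) →
      m.node = .s q → n.jlab ≤ arityAt T q →
      TravR T cfg (⟨.s (q ++ [n.jlab]), n.dist + 2, n.jlab, []⟩ :: n :: s)
  | varE {s : List Occ} {n a m : Occ} :
      cfg.etaVar = true →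
      TravR T cfg (n :: s) →
      n.node.kindIn T = some .var →
      HerApp T (n :: s) 0 →
      1 ≤ n.dist → 1 ≤ n.jlab →
      s[n.dist - 1]? = some a → a.node.kindIn T = some .lam →
      s[n.dist]? = some m →
      (m.node.kindIn T = some .var ∨ m.node.kindIn T = some .app) →
      m.node.arityIn T < n.jlab →
      TravR T cfg (⟨.g m.node n.jlab, n.dist + 2, n.jlab, []⟩ :: n :: s)
  | ivarC {s : List Occ} {n m : Occ} {q : Pos} {jm i : Nat} :
      TravR T cfg (n :: s) →
      n.node.kindIn T = some .var →
      (cfg.branch = true → n.node.extIn T = true) →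
      (cfg.branch = false → HerRoot (n :: s) 0) →
      1 ≤ i →
      (n :: s)[jm]? = some m → m.node.kindIn T = some .var →
      jm ∈ oviewIdx T (n :: s) →
      (cfg.branch = true → jm = 0) →
      (cfg.bound = true → i ≤ ath T (n :: s)) →
      m.node = .s q → i ≤ arityAt T q →
      TravR T cfg (⟨.s (q ++ [i]), jm + 1, i, []⟩ :: n :: s)
  | ivarE {s : List Occ} {n m : Occ} {jm i : Nat} :
      cfg.etaIVar = true →
      TravR T cfg (n :: s) →
      n.node.kindIn T = some .var →
      (cfg.branch = true → n.node.extIn T = true) →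
      (cfg.branch = false → HerRoot (n :: s) 0) →
      1 ≤ i →
      (n :: s)[jm]? = some m → m.node.kindIn T = some .var →
      jm ∈ oviewIdx T (n :: s) →
      (cfg.branch = true → jm = 0) →
      (cfg.bound = true → i ≤ ath T (n :: s)) →
      m.node.arityIn T < i →
      TravR T cfg (⟨.g m.node i, jm + 1, i, []⟩ :: n :: s)

/-- Imaginary traversals of the untyped λ-calculus (Table 1). -/
def Trav (T : CT) : List Occ → Prop :=
  TravR T ⟨false, false, true, true, true⟩

/-- Branching traversals: rule IVar points to the last occurrence. -/
def TravB (T : CT) : List Occ → Prop :=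
  TravR T ⟨true, false, true, true, true⟩

/-- Normalizing traversals (Table 2): branching + arity-threshold bound. -/
def TravN (T : CT) : List Occ → Prop :=
  TravR T ⟨true, true, true, true, true⟩

/-- STLC traversals: no ghost rules at all. -/
def TravSTLC (T : CT) : List Occ → Prop :=
  TravR T ⟨false, false, false, false, false⟩

/-- Traversals without the eta-expanded subcase of rule IVar. -/
def TravNoEtaIVar (T : CT) : List Occ → Prop :=
  TravR T ⟨false, false, true, false, true⟩

/-- Chronological prefix of length `n` of an infinite sequence of
occurrences, in reverse representation. -/
def prefixRev (f : Nat → Occ) (n : Nat) : List Occ :=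
  ((List.range n).map f).reverse
/-! ## Justified paths of the computation tree -/

/-- Justified paths: paths of the computation tree from the root, equipped
with the induced justification pointers (bound variables point to their
binder with the binding index, free variables to the root, λ-nodes to their
parent with the child index). -/
inductive JPath (T : CT) : List Occ → Prop where
  | root : JPath T [rootOcc]
  | lam {s : List Occ} {o : Occ} {p : Pos} {k : Nat} :
      JPath T (o :: s) → o.node = .s p →
      (kindAt T p = some .var ∨ kindAt T p = some .app) →
      (T.nodeAt (p ++ [k])).isSome = true → kindAt T (p ++ [k]) = some .lam →
      JPath T (⟨.s (p ++ [k]), 1, k, []⟩ :: o :: s)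
  | appNode {s : List Occ} {o : Occ} {p : Pos} :
      JPath T (o :: s) → o.node = .s p → kindAt T p = some .lam →
      kindAt T (p ++ [1]) = some .app →
      JPath T (⟨.s (p ++ [1]), 0, 0, []⟩ :: o :: s)
  | varNode {s : List Occ} {o j : Occ} {p bp : Pos} {d k : Nat} :
      JPath T (o :: s) → o.node = .s p → kindAt T p = some .lam →
      kindAt T (p ++ [1]) = some .var →
      1 ≤ d → (o :: s)[d - 1]? = some j → j.node = .s bp →
      EnablesS T bp k (p ++ [1]) →
      JPath T (⟨.s (p ++ [1]), d, k, []⟩ :: o :: s)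

/-- Maximal justified paths. -/
def MaxJPath (T : CT) (s : List Occ) : Prop :=
  JPath T s ∧ ∀ o, ¬ JPath T (o :: s)

/-- Label of an occurrence (structural nodes only). -/
def labOf (T : CT) (o : Occ) : Option NLabel :=
  match o.node with
  | .s p => (T.nodeAt p).map CT.labelOf
  | .g _ _ => none

/-! ## Structures of justified sequences -/

/-- The structure of an occurrence: node kind, pointer distance, pointer
label (node labels are forgotten). -/
structure OccStr where
  kind : Option NKind
  dist : Nat
  jlab : Nat
deriving DecidableEq

/-- The structure of a justified sequence. -/
def strOf (T : CT) (s : List Occ) : List OccStr :=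
  s.map (fun o => ⟨o.node.kindIn T, o.dist, o.jlab⟩)

/-! ## Core projection -/

/-- Indices (with pending-lambda relabelling data) retained by the core
projection, computed with a stack `ys` of pending lambdas. -/
def coreIdx (T : CT) : List Occ → List Name → List (Nat × List Name)
  | [], _ => []
  | o :: s, ys =>
      match o.node.kindIn T with
      | some .var =>
          if o.node.extIn T then
            (0, o.pend) :: (coreIdx T s []).map (fun e => (e.1 + 1, e.2))
          else (coreIdx T s (ys.drop (o.node.arityIn T))).map (fun e => (e.1 + 1, e.2))
      | some .app =>
          (coreIdx T s (ys.drop (o.node.arityIn T))).map (fun e => (e.1 + 1, e.2))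
      | some .lam =>
          if o.node.extIn T then
            (0, o.pend ++ ys) :: (coreIdx T s []).map (fun e => (e.1 + 1, e.2))
          else
            match o.node with
            | .s p =>
                (coreIdx T s (boundAt T p ++ o.pend ++ ys)).map (fun e => (e.1 + 1, e.2))
            | .g _ _ => (coreIdx T s (o.pend ++ ys)).map (fun e => (e.1 + 1, e.2))
      | none => (coreIdx T s ys).map (fun e => (e.1 + 1, e.2))

/-- The core of a justified sequence: the subsequence of external occurrences,
with pending lambdas prepended to the labels of external λ-nodes. -/
def core (T : CT) (s : List Occ) : List Occ :=
  extractK s (coreIdx T s []) true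

/-! ## On-the-fly eta-expansion -/

def modArg : List CT → Nat → (CT → CT) → List CT
  | [], _, _ => []
  | c :: cs, 0, f => f c :: cs
  | c :: cs, k + 1, f => c :: modArg cs k f

def CT.modifyAt : CT → Pos → (CT → CT) → CT
  | t, [], f => f t
  | .lam xs c, 1 :: p, f => .lam xs (c.modifyAt p f)
  | .var z cs, (k + 1) :: p, f => .var z (modArg cs k (fun c => c.modifyAt p f))
  | .app op cs, 0 :: p, f => .app (op.modifyAt p f) cs
  | .app op cs, (k + 1) :: p, f => .app op (modArg cs k (fun c => c.modifyAt p f))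
  | t, _, _ => t
termination_by t p _ => p.length
decreasing_by all_goals simp

def freshCT (T : CT) : Name := (namesCT T).foldr max 0 + 1

/-- One eta-expansion step at the variable/@-node `q`: the subterm `N`
rooted at `q` is replaced by `λθ. N θ` for a fresh `θ` (in the computation
tree, `θ` is appended to the bound variables of the parent λ-node and a new
operand `λ⟨θ⟩` is appended to the children of `q`). -/
def etaStep (T : CT) (q : Pos) : CT :=
  let θ := freshCT T
  let T1 := T.modifyAt q (fun n =>
    match n with
    | .var z cs => .var z (cs ++ [.lam [] (.var θ [])])
    | .app op cs => .app op (cs ++ [.lam [] (.var θ [])])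
    | t => t)
  T1.modifyAt q.dropLast (fun n =>
    match n with
    | .lam xs c => .lam (xs ++ [θ]) c
    | t => t)

/-- Process the occurrences of a traversal chronologically, performing an
eta-expansion at the justifier of each ghost λ-node occurrence (the
eta-expanded subcases of rules Var and IVar); `acc` records the materialized
position of each processed occurrence. -/
def etaFoldGo : CT → List Pos → List Occ → CT
  | T, _, [] => T
  | T, acc, o :: os =>
      match o.node with
      | .s p => etaFoldGo T (p :: acc) os
      | .g _ i =>
          if o.node.kindIn T = some .lam then
            let q := acc.getD (o.dist - 1) []
            etaFoldGo (etaStep T q) ((q ++ [i]) :: acc) os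
          else
            let q := acc.getD 0 []
            etaFoldGo T ((q ++ [1]) :: acc) os

/-- The on-the-fly eta-expansion `M^t` of (the computation tree of) a term
with respect to a finite traversal `t`. -/
def etaExpCT (T : CT) (t : List Occ) : CT := etaFoldGo T [] t.reverse

/-- Element-wise, pointer-preserving extension of a map on extended nodes to
justified sequences. -/
def mapOcc (η : ENode → ENode) (s : List Occ) : List Occ :=
  s.map (fun o => { o with node := η o.node })

/-! ## Isomorphisms of sets of justified sequences -/

/-- Structure-preserving bijection between two sets of justified sequences
(over trees `T₁` and `T₂` respectively). -/
def StrIso (T₁ T₂ : CT) (S₁ S₂ : Set (List Occ)) : Prop :=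
  ∃ φ : List Occ → List Occ, Set.BijOn φ S₁ S₂ ∧
    ∀ s ∈ S₁, strOf T₂ (φ s) = strOf T₁ s

/-- The set of cores of normalizing traversals of a term. -/
def CoreSet (M : Term) : Set (List Occ) :=
  {c | ∃ t, TravN (ctree M) t ∧ c = core (ctree M) t}

/-- The set of structures of core P-views of normalizing traversals
(the quotient `Trav^n(M)/∼`, each class identified with the common structure
of the core P-views of its members). -/
def QuotSet (M : Term) : Set (List OccStr) :=
  {x | ∃ t, TravN (ctree M) t ∧
        x = strOf (ctree M) (pview (ctree M) (core (ctree M) t))}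
/-! ## Strands (for the weaving proposition) -/

/-- `n_q` of the last strand: the (var/@)-occurrence at index `2(q-1)` of the
reversed sequence (`q` counted from 1, so `n_1` is the last occurrence). -/
def nOcc (t : List Occ) (q : Nat) : Occ := (t[2 * (q - 1)]?).getD default

/-- `α_q` of the last strand: the λ-occurrence at index `2q - 1`. -/
def aOcc (t : List Occ) (q : Nat) : Occ := (t[2 * q - 1]?).getD default

def nAr (T : CT) (t : List Occ) (q : Nat) : Int := ((nOcc t q).node.arityIn T : Int)
def aAr (T : CT) (t : List Occ) (q : Nat) : Int := ((aOcc t q).node.arityIn T : Int)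

/-- `i_q = i - ∑_{j=1}^{q-1} (|n_j| - |α_j|)`. -/
def iSeq (T : CT) (t : List Occ) (i : Nat) (q : Nat) : Int :=
  (i : Int) - ∑ j ∈ Finset.Ico 1 q, (nAr T t j - aAr T t j)

/-- The last strand of `t` has length `2k`: it starts with an external
λ-node `α_k`, ends with the last occurrence `n_1`, an external variable,
and all the `2k - 2` occurrences in between are internal, alternating
between λ-nodes and variable/@-nodes. -/
def LastStrand (T : CT) (t : List Occ) (k : Nat) : Prop :=
  1 ≤ k ∧ 2 * k ≤ t.length ∧
  (∀ q, 1 ≤ q → q ≤ k →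
    ((nOcc t q).node.kindIn T = some .var ∨ (nOcc t q).node.kindIn T = some .app)) ∧
  (∀ q, 1 ≤ q → q ≤ k → (aOcc t q).node.kindIn T = some .lam) ∧
  (nOcc t 1).node.kindIn T = some .var ∧ (nOcc t 1).node.extIn T = true ∧
  (aOcc t k).node.extIn T = true ∧
  (∀ j, 1 ≤ j → j ≤ 2 * k - 2 → ∀ o, t[j]? = some o → o.node.extIn T = false)

/-! ## Spinal paths (for the generalized redex argument lookup) -/

/-- Position of `@_j` on the spinal descent below the @-node at `a`
(`@_r = a` is the topmost one, `@_1` the lowest). -/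
def atPos (a : Pos) (r j : Nat) : Pos :=
  a ++ (List.replicate (r - j) ([0, 1] : Pos)).flatten

/-- The sequence `i_1 = i`, `i_{j+1} = i_j - |@_j| + |λx̄_{j+1}|` along the
spinal descent. -/
def iSeqL (T : CT) (a : Pos) (r i : Nat) : Nat → Int
  | 0 => (i : Int)
  | 1 => (i : Int)
  | j + 1 =>
      iSeqL T a r i j - (arityAt T (atPos a r j) : Int)
        + (arityAt T (atPos a r (j + 1) ++ [0]) : Int)
end ULC
namespace ULC
namespace Aux
open Term

/-- naive capture-permitting substitution (used only under freshness). -/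
def ssub (x : Name) (s : Term) : Term → Term
  | .var y => if y = x then s else .var y
  | .app u v => .app (ssub x s u) (ssub x s v)
  | .lam y u => if y = x then .lam y u else .lam y (ssub x s u)

theorem subst_eq_ssub (x : Name) (s : Term) :
    ∀ t : Term, (∀ y ∈ t.bndrs, y ∉ s.fv) → Term.subst x s t = ssub x s t := by
  intro t
  induction t with
  | var y => intro _; rw [Term.subst]; rfl
  | app u v ihu ihv =>
      intro h
      rw [Term.subst]
      simp only [ssub]
      rw [ihu (fun y hy => h y (by simp [Term.bndrs, hy])),
          ihv (fun y hy => h y (by simp [Term.bndrs, hy]))]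
  | lam y u ih =>
      intro h
      rw [Term.subst]
      by_cases hyx : y = x
      · simp [hyx, ssub]
      · have hyf : y ∉ s.fv := h y (by simp [Term.bndrs])
        rw [if_neg hyx, if_neg (by intro hc; exact hyf hc.1)]
        simp only [ssub, if_neg hyx]
        rw [ih (fun z hz => h z (by simp [Term.bndrs, hz]))]

theorem ssub_fresh (x : Name) (s : Term) :
    ∀ t : Term, x ∉ t.fv → ssub x s t = t := by
  intro t
  induction t with
  | var y =>
      intro h; simp [Term.fv] at h
      have : ¬ y = x := fun hc => h hc.symm
      simp [ssub, this]
  | app u v ihu ihv =>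
      intro h; simp [Term.fv] at h
      simp [ssub, ihu h.1, ihv h.2]
  | lam y u ih =>
      intro h
      by_cases hyx : y = x
      · simp [ssub, hyx]
      · have : x ∉ u.fv := by
          intro hx
          exact h (by
            simp only [Term.fv, List.mem_filter, bne_iff_ne, ne_eq]
            exact ⟨hx, fun hc => hyx hc.symm⟩)
        simp [ssub, hyx, ih this]

/-! ### position lemmas -/

theorem subtermAt_append {t s : Term} {c : Pos} (h : Term.subtermAt t c = some s) (d : Pos) :
    Term.subtermAt t (c ++ d) = Term.subtermAt s d := by
  induction c generalizing t with
  | nil => simp [Term.subtermAt] at h; subst h; rfl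
  | cons i c ih =>
      cases t with
      | var z => simp [Term.subtermAt] at h
      | lam y u =>
          match i with
          | 0 => exact ih (t := u) h
          | i + 1 => simp [Term.subtermAt] at h
      | app u v =>
          match i with
          | 0 => exact ih (t := u) h
          | 1 => exact ih (t := v) h
          | i + 2 => simp [Term.subtermAt] at h

theorem replaceAt_append {t s : Term} {c : Pos} (h : Term.subtermAt t c = some s) (d : Pos)
    (a : Term) : Term.replaceAt t (c ++ d) a = Term.replaceAt t c (Term.replaceAt s d a) := by
  induction c generalizing t with
  | nil => simp [Term.subtermAt] at h; subst h; simp [Term.replaceAt]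
  | cons i c ih =>
      cases t with
      | var z => simp [Term.subtermAt] at h
      | lam y u =>
          match i with
          | 0 => simp only [List.cons_append, Term.replaceAt, List.append_eq]; rw [ih (t := u) h]
          | i + 1 => simp [Term.subtermAt] at h
      | app u v =>
          match i with
          | 0 => simp only [List.cons_append, Term.replaceAt, List.append_eq]; rw [ih (t := u) h]
          | 1 => simp only [List.cons_append, Term.replaceAt, List.append_eq]; rw [ih (t := v) h]
          | i + 2 => simp [Term.subtermAt] at h

theorem subtermAt_replaceAt {t s : Term} {c : Pos} (h : Term.subtermAt t c = some s)
    (a : Term) : Term.subtermAt (Term.replaceAt t c a) c = some a := by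
  induction c generalizing t with
  | nil => simp [Term.replaceAt, Term.subtermAt]
  | cons i c ih =>
      cases t with
      | var z => simp [Term.subtermAt] at h
      | lam y u =>
          match i with
          | 0 => simpa [Term.replaceAt, Term.subtermAt] using ih (t := u) h
          | i + 1 => simp [Term.subtermAt] at h
      | app u v =>
          match i with
          | 0 => simpa [Term.replaceAt, Term.subtermAt] using ih (t := u) h
          | 1 => simpa [Term.replaceAt, Term.subtermAt] using ih (t := v) h
          | i + 2 => simp [Term.subtermAt] at h

theorem replaceAt_replaceAt {t s : Term} {c : Pos} (h : Term.subtermAt t c = some s)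
    (a b : Term) : Term.replaceAt (Term.replaceAt t c a) c b = Term.replaceAt t c b := by
  induction c generalizing t with
  | nil => simp [Term.replaceAt]
  | cons i c ih =>
      cases t with
      | var z => simp [Term.subtermAt] at h
      | lam y u =>
          match i with
          | 0 => simpa [Term.replaceAt] using ih (t := u) h
          | i + 1 => simp [Term.subtermAt] at h
      | app u v =>
          match i with
          | 0 => simpa [Term.replaceAt] using ih (t := u) h
          | 1 => simpa [Term.replaceAt] using ih (t := v) h
          | i + 2 => simp [Term.subtermAt] at h

theorem replaceAt_self {t s : Term} {c : Pos} (h : Term.subtermAt t c = some s) :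
    Term.replaceAt t c s = t := by
  induction c generalizing t with
  | nil => simp [Term.subtermAt] at h; simp [Term.replaceAt, h]
  | cons i c ih =>
      cases t with
      | var z => simp [Term.subtermAt] at h
      | lam y u =>
          match i with
          | 0 => simpa [Term.replaceAt] using ih (t := u) h
          | i + 1 => simp [Term.subtermAt] at h
      | app u v =>
          match i with
          | 0 => simpa [Term.replaceAt] using ih (t := u) h
          | 1 => simpa [Term.replaceAt] using ih (t := v) h
          | i + 2 => simp [Term.subtermAt] at h

theorem beta_replace {s s' : Term} (hb : Beta s s') :
    ∀ (c : Pos) (t : Term), Term.subtermAt t c = some s →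
      Beta t (Term.replaceAt t c s') := by
  intro c
  induction c with
  | nil =>
      intro t h; simp [Term.subtermAt] at h; subst h
      simpa [Term.replaceAt] using hb
  | cons i c ih =>
      intro t h
      cases t with
      | var z => simp [Term.subtermAt] at h
      | lam y u =>
          match i with
          | 0 => exact Beta.lamC y (ih u h)
          | i + 1 => simp [Term.subtermAt] at h
      | app u v =>
          match i with
          | 0 => exact Beta.appL v (ih u h)
          | 1 => exact Beta.appR u (ih v h)
          | i + 2 => simp [Term.subtermAt] at h

theorem star_replace {s s' : Term} (hs : BetaStar s s') :
    ∀ (c : Pos) (t : Term), Term.subtermAt t c = some s →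
      BetaStar t (Term.replaceAt t c s') := by
  induction hs using Relation.ReflTransGen.head_induction_on with
  | refl => intro c t h; rw [replaceAt_self h]; exact Relation.ReflTransGen.refl
  | @head a b hab _ ih =>
      intro c t h
      refine Relation.ReflTransGen.head (beta_replace hab c t h) ?_
      have h2 := subtermAt_replaceAt h b
      have h3 := ih c _ h2
      rwa [replaceAt_replaceAt h b s'] at h3
/-! ### bndrs / fv lemmas -/

theorem count_bndrs_subterm {t s : Term} {r : Pos} (h : Term.subtermAt t r = some s)
    (z : Name) : s.bndrs.count z ≤ t.bndrs.count z := by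
  induction r generalizing t with
  | nil => simp [Term.subtermAt] at h; subst h; exact le_refl _
  | cons i r ih =>
      cases t with
      | var w => simp [Term.subtermAt] at h
      | lam y u =>
          match i with
          | 0 =>
              have := ih (t := u) h
              simp only [Term.bndrs, List.count_cons]
              omega
          | i + 1 => simp [Term.subtermAt] at h
      | app u v =>
          match i with
          | 0 =>
              have := ih (t := u) h
              simp only [Term.bndrs, List.count_append]
              omega
          | 1 =>
              have := ih (t := v) h
              simp only [Term.bndrs, List.count_append]
              omega
          | i + 2 => simp [Term.subtermAt] at h

theorem mem_bndrs_subterm {t s : Term} {r : Pos} (h : Term.subtermAt t r = some s)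
    {z : Name} (hz : z ∈ s.bndrs) : z ∈ t.bndrs := by
  have h1 := count_bndrs_subterm h z
  have h2 : 0 < s.bndrs.count z := List.count_pos_iff.mpr hz
  exact List.count_pos_iff.mp (lt_of_lt_of_le h2 h1)

theorem fv_subterm {t s : Term} {r : Pos} (h : Term.subtermAt t r = some s)
    {y : Name} (hy : y ∈ s.fv) :
    y ∈ t.fv ∨ ∃ r1 r2 b, r = r1 ++ 0 :: r2 ∧ Term.subtermAt t r1 = some (.lam y b) := by
  induction r generalizing t with
  | nil => simp [Term.subtermAt] at h; subst h; exact Or.inl hy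
  | cons i r ih =>
      cases t with
      | var w => simp [Term.subtermAt] at h
      | lam z u =>
          match i with
          | 0 =>
              rcases ih (t := u) h with h1 | ⟨r1, r2, b, hr, hs⟩
              · by_cases hyz : y = z
                · subst hyz
                  exact Or.inr ⟨[], r, u, rfl, by simp [Term.subtermAt]⟩
                · refine Or.inl ?_
                  simp only [Term.fv, List.mem_filter, bne_iff_ne, ne_eq]
                  exact ⟨h1, hyz⟩
              · exact Or.inr ⟨0 :: r1, r2, b, by simp [hr], hs⟩
          | i + 1 => simp [Term.subtermAt] at h
      | app u v =>
          match i with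
          | 0 =>
              rcases ih (t := u) h with h1 | ⟨r1, r2, b, hr, hs⟩
              · exact Or.inl (by simp [Term.fv, h1])
              · exact Or.inr ⟨0 :: r1, r2, b, by simp [hr], hs⟩
          | 1 =>
              rcases ih (t := v) h with h1 | ⟨r1, r2, b, hr, hs⟩
              · exact Or.inl (by simp [Term.fv, h1])
              · exact Or.inr ⟨1 :: r1, r2, b, by simp [hr], hs⟩
          | i + 2 => simp [Term.subtermAt] at h

theorem bndrs_replaceAt {z : Name} :
    ∀ (p : Pos) (t s : Term), z ∈ (Term.replaceAt t p s).bndrs → z ∈ t.bndrs ∨ z ∈ s.bndrs := by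
  intro p
  induction p with
  | nil => intro t s h; exact Or.inr (by simpa [Term.replaceAt] using h)
  | cons i p ih =>
      intro t s h
      cases t with
      | var w => exact Or.inl (by simpa [Term.replaceAt] using h)
      | lam y u =>
          match i with
          | 0 =>
              simp only [Term.replaceAt, Term.bndrs, List.mem_cons] at h ⊢
              rcases h with h | h
              · exact Or.inl (Or.inl h)
              · rcases ih u s h with h | h
                · exact Or.inl (Or.inr h)
                · exact Or.inr h
          | i + 1 => exact Or.inl (by simpa [Term.replaceAt] using h)
      | app u v =>
          match i with
          | 0 =>
              simp only [Term.replaceAt, Term.bndrs, List.mem_append] at h ⊢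
              rcases h with h | h
              · rcases ih u s h with h | h
                · exact Or.inl (Or.inl h)
                · exact Or.inr h
              · exact Or.inl (Or.inr h)
          | 1 =>
              simp only [Term.replaceAt, Term.bndrs, List.mem_append] at h ⊢
              rcases h with h | h
              · exact Or.inl (Or.inl h)
              · rcases ih v s h with h | h
                · exact Or.inl (Or.inr h)
                · exact Or.inr h
          | i + 2 => exact Or.inl (by simpa [Term.replaceAt] using h)

/-! ### ssub lemmas -/

theorem bndrs_ssub {y : Name} {w : Term} :
    ∀ (t : Term) {z : Name}, z ∈ (ssub y w t).bndrs → z ∈ t.bndrs ∨ z ∈ w.bndrs := by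
  intro t
  induction t with
  | var v =>
      intro z h
      by_cases hv : v = y
      · simp only [ssub, if_pos hv] at h; exact Or.inr h
      · simp only [ssub, if_neg hv] at h; exact Or.inl h
  | app u v ihu ihv =>
      intro z h
      simp only [ssub, Term.bndrs, List.mem_append] at h ⊢
      rcases h with h | h
      · rcases ihu h with h | h
        · exact Or.inl (Or.inl h)
        · exact Or.inr h
      · rcases ihv h with h | h
        · exact Or.inl (Or.inr h)
        · exact Or.inr h
  | lam v u ih =>
      intro z h
      by_cases hv : v = y
      · simp only [ssub, if_pos hv] at h; exact Or.inl h
      · simp only [ssub, if_neg hv, Term.bndrs, List.mem_cons] at h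
        rcases h with h | h
        · exact Or.inl (by simp [Term.bndrs, h])
        · rcases ih h with h | h
          · exact Or.inl (by simp [Term.bndrs, h])
          · exact Or.inr h

theorem fv_ssub {y : Name} {w : Term} :
    ∀ (t : Term) {z : Name}, z ∈ (ssub y w t).fv → (z ∈ t.fv ∧ z ≠ y) ∨ z ∈ w.fv := by
  intro t
  induction t with
  | var v =>
      intro z h
      by_cases hv : v = y
      · simp only [ssub, if_pos hv] at h; exact Or.inr h
      · simp only [ssub, if_neg hv, Term.fv, List.mem_singleton] at h
        subst h; exact Or.inl ⟨by simp [Term.fv], hv⟩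
  | app u v ihu ihv =>
      intro z h
      simp only [ssub, Term.fv, List.mem_append] at h ⊢
      rcases h with h | h
      · rcases ihu h with ⟨h1, h2⟩ | h
        · exact Or.inl ⟨Or.inl h1, h2⟩
        · exact Or.inr h
      · rcases ihv h with ⟨h1, h2⟩ | h
        · exact Or.inl ⟨Or.inr h1, h2⟩
        · exact Or.inr h
  | lam v u ih =>
      intro z h
      by_cases hv : v = y
      · simp only [ssub, if_pos hv] at h
        subst hv
        simp only [Term.fv, List.mem_filter, bne_iff_ne, ne_eq] at h
        exact Or.inl ⟨by simp [Term.fv, List.mem_filter, h.1]; exact h.2, h.2⟩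
      · simp only [ssub, if_neg hv, Term.fv, List.mem_filter, bne_iff_ne, ne_eq] at h
        rcases ih h.1 with ⟨h1, h2⟩ | h1
        · refine Or.inl ⟨?_, h2⟩
          simp only [Term.fv, List.mem_filter, bne_iff_ne, ne_eq]
          exact ⟨h1, h.2⟩
        · exact Or.inr h1

theorem count_bndrs_ssub {y : Name} {w : Term} {x : Name} (hx : x ∉ w.bndrs) :
    ∀ t : Term, (ssub y w t).bndrs.count x = t.bndrs.count x := by
  intro t
  induction t with
  | var v =>
      by_cases hv : v = y
      · simp only [ssub, if_pos hv, Term.bndrs]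
        simp [List.count_eq_zero.mpr hx]
      · simp [ssub, if_neg hv]
  | app u v ihu ihv => simp [ssub, Term.bndrs, List.count_append, ihu, ihv]
  | lam v u ih =>
      by_cases hv : v = y
      · simp [ssub, if_pos hv]
      · simp [ssub, if_neg hv, Term.bndrs, List.count_cons, ih]

theorem subtermAt_ssub_var {y : Name} {w : Term} {x : Name} (hxy : x ≠ y) :
    ∀ (p : Pos) (t : Term), Term.subtermAt t p = some (.var x) →
      Term.subtermAt (ssub y w t) p = some (.var x) := by
  intro p
  induction p with
  | nil =>
      intro t h
      simp only [Term.subtermAt] at h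
      injection h with h; subst h
      simp [ssub, if_neg hxy, Term.subtermAt]
  | cons i p ih =>
      intro t h
      cases t with
      | var v => simp [Term.subtermAt] at h
      | lam z u =>
          match i with
          | 0 =>
              by_cases hz : z = y
              · simpa [ssub, if_pos hz, Term.subtermAt] using h
              · simpa [ssub, if_neg hz, Term.subtermAt] using ih u h
          | i + 1 => simp [Term.subtermAt] at h
      | app u v =>
          match i with
          | 0 => simpa [ssub, Term.subtermAt] using ih u h
          | 1 => simpa [ssub, Term.subtermAt] using ih v h
          | i + 2 => simp [Term.subtermAt] at h

theorem subtermAt_ssub_lam {y : Name} {w : Term} {x : Name} {b : Term} :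
    ∀ (p : Pos) (t : Term), Term.subtermAt t p = some (.lam x b) →
      ∃ b', Term.subtermAt (ssub y w t) p = some (.lam x b') := by
  intro p
  induction p with
  | nil =>
      intro t h
      simp only [Term.subtermAt] at h
      injection h with h; subst h
      by_cases hx : x = y
      · exact ⟨b, by simp [ssub, if_pos hx, Term.subtermAt]⟩
      · exact ⟨ssub y w b, by simp [ssub, if_neg hx, Term.subtermAt]⟩
  | cons i p ih =>
      intro t h
      cases t with
      | var v => simp [Term.subtermAt] at h
      | lam z u =>
          match i with
          | 0 =>
              by_cases hz : z = y
              · exact ⟨b, by simpa [ssub, if_pos hz, Term.subtermAt] using h⟩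
              · obtain ⟨b', hb'⟩ := ih u h
                exact ⟨b', by simpa [ssub, if_neg hz, Term.subtermAt] using hb'⟩
          | i + 1 => simp [Term.subtermAt] at h
      | app u v =>
          match i with
          | 0 =>
              obtain ⟨b', hb'⟩ := ih u h
              exact ⟨b', by simpa [ssub, Term.subtermAt] using hb'⟩
          | 1 =>
              obtain ⟨b', hb'⟩ := ih v h
              exact ⟨b', by simpa [ssub, Term.subtermAt] using hb'⟩
          | i + 2 => simp [Term.subtermAt] at h

theorem lamListPos_ssub {y : Name} {w : Term} :
    ∀ (t : Term) (n : Nat) (q : Pos), (Term.lamListPos t)[n]? = some q →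
      (Term.lamListPos (ssub y w t))[n]? = some q := by
  intro t
  induction t with
  | var v => intro n q h; simp [Term.lamListPos] at h
  | lam z u ih =>
      intro n q h
      by_cases hz : z = y
      · simpa [ssub, if_pos hz] using h
      · simp only [ssub, if_neg hz, Term.lamListPos]
        match n with
        | 0 => simpa [Term.lamListPos] using h
        | n + 1 =>
            simp only [Term.lamListPos, List.getElem?_cons_succ, List.getElem?_map] at h ⊢
            cases hLu : (Term.lamListPos u)[n]? with
            | none => rw [hLu] at h; simp at h
            | some q' =>
                rw [hLu] at h
                simp only [Option.map_some] at h
                rw [ih n q' hLu]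
                simpa using h
  | app u v ihu ihv =>
      intro n q h
      simp only [ssub, Term.lamListPos, List.getElem?_tail, List.getElem?_map] at h ⊢
      cases hLu : (Term.lamListPos u)[n+1]? with
      | none => rw [hLu] at h; simp at h
      | some q' =>
          rw [hLu] at h
          rw [ihu (n+1) q' hLu]
          simpa using h

theorem ssub_replace_self {x : Name} {v : Term} (hxv : x ∉ v.fv) :
    ∀ (p : Pos) (b : Term), Term.subtermAt b p = some (.var x) → x ∉ b.bndrs →
      ssub x v (Term.replaceAt b p v) = ssub x v b := by
  intro p
  induction p with
  | nil =>
      intro b h _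
      simp only [Term.subtermAt] at h
      injection h with h; subst h
      simp [Term.replaceAt, ssub, ssub_fresh x v v hxv]
  | cons i p ih =>
      intro b h hb
      cases b with
      | var z => simp [Term.subtermAt] at h
      | lam z u =>
          match i with
          | 0 =>
              have hzx : ¬ z = x := by
                intro hc; exact hb (by simp [Term.bndrs, hc])
              have hu : x ∉ u.bndrs := fun hc => hb (by simp [Term.bndrs, hc])
              simp only [Term.replaceAt, ssub, if_neg hzx]
              rw [ih u h hu]
          | i + 1 => simp [Term.subtermAt] at h
      | app u v' =>
          match i with
          | 0 =>
              have hu : x ∉ u.bndrs := fun hc => hb (by simp [Term.bndrs, hc])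
              simp only [Term.replaceAt, ssub]
              rw [ih u h hu]
          | 1 =>
              have hv' : x ∉ v'.bndrs := fun hc => hb (by simp [Term.bndrs, hc])
              simp only [Term.replaceAt, ssub]
              rw [ih v' h hv']
          | i + 2 => simp [Term.subtermAt] at h

theorem ssub_replace_comm {y : Name} {w v : Term} (hv : ssub y w v = v) {x : Name}
    (hxy : x ≠ y) :
    ∀ (p : Pos) (b : Term), Term.subtermAt b p = some (.var x) →
      ssub y w (Term.replaceAt b p v) = Term.replaceAt (ssub y w b) p v := by
  intro p
  induction p with
  | nil =>
      intro b h
      simp [Term.replaceAt, hv]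
  | cons i p ih =>
      intro b h
      cases b with
      | var z => simp [Term.subtermAt] at h
      | lam z u =>
          match i with
          | 0 =>
              by_cases hz : z = y
              · simp [Term.replaceAt, ssub, if_pos hz]
              · simp only [Term.replaceAt, ssub, if_neg hz]
                rw [ih u h]
          | i + 1 => simp [Term.subtermAt] at h
      | app u v' =>
          match i with
          | 0 => simp only [Term.replaceAt, ssub]; rw [ih u h]
          | 1 => simp only [Term.replaceAt, ssub]; rw [ih v' h]
          | i + 2 => simp [Term.subtermAt] at h
/-! ### firing generalized redexes -/

def apps : Term → List Term → Term
  | u, [] => u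
  | u, a :: as => apps (.app u a) as

inductive Fires : Term → List Term → Term → Prop
  | nil (u : Term) : Fires u [] u
  | lam {x u0 w args r} : Fires (Term.subst x w u0) args r → Fires (.lam x u0) (w :: args) r
  | app {u1 u2 args r} : Fires u1 (u2 :: args) r → Fires (.app u1 u2) args r

theorem beta_apps : ∀ (args : List Term) {u u' : Term}, Beta u u' →
    Beta (apps u args) (apps u' args) := by
  intro args
  induction args with
  | nil => intro u u' h; exact h
  | cons a as ih => intro u u' h; exact ih (Beta.appL a h)

theorem fires_star {u : Term} {args : List Term} {r : Term} (h : Fires u args r) :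
    BetaStar (apps u args) r := by
  induction h with
  | nil u => exact Relation.ReflTransGen.refl
  | @lam x u0 w args r _ ih =>
      exact Relation.ReflTransGen.head (beta_apps args (Beta.redex x u0 w)) ih
  | app _ ih => exact ih

theorem main (q : Pos) (u : Term) (args : List Term) (v : Term) (x : Name) (p₀ : Pos)
    (hlast : args.getLast? = some v)
    (hidx : (Term.lamListPos u)[args.length - 1]? = some q)
    (hlam : ∃ b, Term.subtermAt u q = some (.lam x b))
    (hvar : Term.subtermAt u (q ++ 0 :: p₀) = some (.var x))
    (hcnt : u.bndrs.count x = 1)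
    (hxargs : ∀ a ∈ args, x ∉ a.bndrs)
    (hinv : ∀ y, (y ∈ u.bndrs ∨ ∃ a ∈ args, y ∈ a.bndrs) →
      y ∉ u.fv ∧ ∀ a ∈ args, y ∉ a.fv) :
    ∃ r, Fires u args r ∧ Fires (Term.replaceAt u (q ++ 0 :: p₀) v) args r := by
  cases u with
  | var z => simp [Term.lamListPos] at hidx
  | app u1 u2 =>
      -- push the operand on the stack
      have hne : args ≠ [] := by intro h; subst h; simp at hlast
      obtain ⟨a1, args', rfl⟩ : ∃ a1 args', args = a1 :: args' := by
        cases args with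
        | nil => exact absurd rfl hne
        | cons a l => exact ⟨a, l, rfl⟩
      simp only [Term.lamListPos, List.getElem?_tail, List.getElem?_map,
        List.length_cons, Nat.add_sub_cancel] at hidx
      obtain ⟨q'', hq'', rfl⟩ : ∃ q'', (Term.lamListPos u1)[args'.length + 1]? = some q''
          ∧ q = 0 :: q'' := by
        cases hL : (Term.lamListPos u1)[args'.length + 1]? with
        | none => rw [hL] at hidx; simp at hidx
        | some q' => rw [hL] at hidx; simp only [Option.map_some] at hidx
                     exact ⟨q', rfl, by injection hidx with h; exact h.symm⟩
      simp only [List.cons_append, Term.subtermAt] at hlam hvar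
      obtain ⟨b, hlam'⟩ := hlam
      have hxm1 : x ∈ u1.bndrs :=
        mem_bndrs_subterm hlam' (by simp [Term.bndrs])
      have hc1 : 1 ≤ u1.bndrs.count x := List.count_pos_iff.mpr hxm1
      simp only [Term.bndrs, List.count_append] at hcnt
      have hcu1 : u1.bndrs.count x = 1 := by omega
      have hxu2 : x ∉ u2.bndrs := by
        intro hc
        have := List.count_pos_iff.mpr hc
        omega
      have hrec := main q'' u1 (u2 :: a1 :: args') v x p₀
        (by rw [List.getLast?_cons_cons]; exact hlast)
        (by simpa using hq'')
        ⟨b, hlam'⟩ hvar hcu1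
        (by
          intro a ha
          rcases List.mem_cons.mp ha with rfl | ha
          · exact hxu2
          · exact hxargs a ha)
        (by
          intro y hy
          have htrig : y ∈ (Term.app u1 u2).bndrs ∨ ∃ a ∈ a1 :: args', y ∈ a.bndrs := by
            rcases hy with hy | ⟨a, ha, hya⟩
            · exact Or.inl (by simp [Term.bndrs, hy])
            · rcases List.mem_cons.mp ha with rfl | ha
              · exact Or.inl (by simp [Term.bndrs, hya])
              · exact Or.inr ⟨a, ha, hya⟩
          obtain ⟨h1, h2⟩ := hinv y htrig
          simp only [Term.fv, List.mem_append] at h1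
          refine ⟨fun hc => h1 (Or.inl hc), ?_⟩
          intro a ha
          rcases List.mem_cons.mp ha with rfl | ha
          · exact fun hc => h1 (Or.inr hc)
          · exact h2 a ha)
      obtain ⟨r, h1, h2⟩ := hrec
      refine ⟨r, Fires.app h1, ?_⟩
      simp only [List.cons_append, Term.replaceAt]
      exact Fires.app h2
  | lam x0 b0 =>
      cases args with
      | nil => simp at hlast
      | cons w args' =>
        cases args' with
        | nil =>
            -- base case: a genuine redex (λx.b0) v
            simp only [List.getLast?_singleton] at hlast
            injection hlast with hlast
            subst hlast
            have hq : q = [] := by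
              simp only [Term.lamListPos, List.length_cons, List.length_nil,
                Nat.add_sub_cancel, List.getElem?_cons_zero] at hidx
              injection hidx with h; exact h.symm
            subst hq
            obtain ⟨b, hlam'⟩ := hlam
            simp only [Term.subtermAt] at hlam'
            injection hlam' with hlam'
            obtain ⟨h1, h2⟩ := Term.lam.inj hlam'
            subst h1; subst h2
            simp only [List.nil_append, Term.subtermAt] at hvar
            simp only [Term.bndrs, List.count_cons_self] at hcnt
            have hxb : x0 ∉ b0.bndrs := by
              intro hc
              have := List.count_pos_iff.mpr hc
              omega
            have hxv : x0 ∉ w.fv :=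
              (hinv x0 (Or.inl (by simp [Term.bndrs]))).2 w (by simp)
            have hbv : ∀ y ∈ b0.bndrs, y ∉ w.fv := fun y hy =>
              (hinv y (Or.inl (by simp [Term.bndrs, hy]))).2 w (by simp)
            have hvv : ∀ y ∈ w.bndrs, y ∉ w.fv := fun y hy =>
              (hinv y (Or.inr ⟨w, by simp, hy⟩)).2 w (by simp)
            refine ⟨Term.subst x0 w b0, Fires.lam (Fires.nil _), ?_⟩
            simp only [List.nil_append, Term.replaceAt]
            have heq : Term.subst x0 w (Term.replaceAt b0 p₀ w) = Term.subst x0 w b0 := by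
              rw [subst_eq_ssub x0 w b0 hbv,
                  subst_eq_ssub x0 w (Term.replaceAt b0 p₀ w) (by
                    intro y hy
                    rcases bndrs_replaceAt p₀ b0 w hy with hy | hy
                    · exact hbv y hy
                    · exact hvv y hy)]
              exact ssub_replace_self hxv p₀ b0 hvar hxb
            exact Fires.lam (heq ▸ Fires.nil _)
        | cons a1 rest =>
            -- consume one argument and keep firing
            have hlast' : (a1 :: rest).getLast? = some v := by
              rw [List.getLast?_cons_cons] at hlast; exact hlast
            have hvmem : v ∈ w :: a1 :: rest :=
              List.mem_cons_of_mem w (List.mem_of_getLast? hlast')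
            simp only [Term.lamListPos, List.length_cons, Nat.add_sub_cancel,
              List.getElem?_cons_succ, List.getElem?_map] at hidx
            obtain ⟨q'', hq'', rfl⟩ : ∃ q'',
                (Term.lamListPos b0)[rest.length]? = some q'' ∧ q = 0 :: q'' := by
              cases hL : (Term.lamListPos b0)[rest.length]? with
              | none => rw [hL] at hidx; simp at hidx
              | some q' => rw [hL] at hidx; simp only [Option.map_some] at hidx
                           exact ⟨q', rfl, by injection hidx with h; exact h.symm⟩
            obtain ⟨b, hlam'⟩ := hlam
            simp only [Term.subtermAt] at hlam'
            simp only [List.cons_append, Term.subtermAt, List.append_eq] at hvar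
            have hxb0 : x ∈ b0.bndrs :=
              mem_bndrs_subterm hlam' (by simp [Term.bndrs])
            have hcb0 : 1 ≤ b0.bndrs.count x := List.count_pos_iff.mpr hxb0
            simp only [Term.bndrs, List.count_cons] at hcnt
            have hxx0 : x ≠ x0 := by
              intro hc; subst hc; simp at hcnt; omega
            have hcnt' : b0.bndrs.count x = 1 := by
              have : ¬ (x0 = x) := fun hc => hxx0 hc.symm
              simp [this] at hcnt; omega
            have hwmem : w ∈ w :: a1 :: rest := by simp
            have hbw : ∀ y ∈ b0.bndrs, y ∉ w.fv := fun y hy =>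
              (hinv y (Or.inl (by simp [Term.bndrs, hy]))).2 w hwmem
            have hsubst : Term.subst x0 w b0 = ssub x0 w b0 :=
              subst_eq_ssub x0 w b0 hbw
            have hx0v : x0 ∉ v.fv :=
              (hinv x0 (Or.inl (by simp [Term.bndrs]))).2 v hvmem
            obtain ⟨b', hlamS⟩ := subtermAt_ssub_lam (y := x0) (w := w) q'' b0 hlam'
            have hrec := main q'' (ssub x0 w b0) (a1 :: rest) v x p₀
              hlast'
              (by simpa using lamListPos_ssub b0 rest.length q'' hq'')
              ⟨b', hlamS⟩
              (subtermAt_ssub_var hxx0 _ b0 hvar)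
              (by rw [count_bndrs_ssub (hxargs w hwmem) b0]; exact hcnt')
              (fun a ha => hxargs a (List.mem_cons_of_mem w ha))
              (by
                intro y hy
                have htrig : y ∈ (Term.lam x0 b0).bndrs
                    ∨ ∃ a ∈ w :: a1 :: rest, y ∈ a.bndrs := by
                  rcases hy with hy | ⟨a, ha, hya⟩
                  · rcases bndrs_ssub b0 hy with hy | hy
                    · exact Or.inl (by simp [Term.bndrs, hy])
                    · exact Or.inr ⟨w, hwmem, hy⟩
                  · exact Or.inr ⟨a, List.mem_cons_of_mem w ha, hya⟩
                obtain ⟨h1, h2⟩ := hinv y htrig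
                constructor
                · intro hc
                  rcases fv_ssub b0 hc with ⟨hc1, hc2⟩ | hc1
                  · exact h1 (by
                      simp only [Term.fv, List.mem_filter, bne_iff_ne, ne_eq]
                      exact ⟨hc1, hc2⟩)
                  · exact h2 w hwmem hc1
                · exact fun a ha => h2 a (List.mem_cons_of_mem w ha))
            obtain ⟨r, h1, h2⟩ := hrec
            refine ⟨r, Fires.lam (hsubst ▸ h1), ?_⟩
            simp only [List.cons_append, Term.replaceAt, List.append_eq]
            apply Fires.lam
            have hbrv : ∀ y ∈ (Term.replaceAt b0 (q'' ++ 0 :: p₀) v).bndrs, y ∉ w.fv := by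
              intro y hy
              rcases bndrs_replaceAt _ b0 v hy with hy | hy
              · exact hbw y hy
              · exact (hinv y (Or.inr ⟨v, hvmem, hy⟩)).2 w hwmem
            rw [subst_eq_ssub x0 w _ hbrv,
              ssub_replace_comm (ssub_fresh x0 w v hx0v) hxx0 _ b0 hvar]
            exact h2
termination_by q.length
decreasing_by all_goals (subst_vars; simp)
/-! ### structure of generalized redexes and binders -/

theorem gr_spec : ∀ (t : Term) (lp ap : Pos), (lp, ap) ∈ t.gr →
    ∃ c U V q, Term.subtermAt t c = some (.app U V) ∧ ap = c ++ [1] ∧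
      lp = c ++ 0 :: q ∧ (Term.lamListPos U)[0]? = some q := by
  intro t
  induction t with
  | var z => intro lp ap h; simp [Term.gr] at h
  | lam z u ih =>
      intro lp ap h
      simp only [Term.gr, List.mem_map] at h
      obtain ⟨⟨lp', ap'⟩, hmem, heq⟩ := h
      injection heq with h1 h2
      subst h1; subst h2
      obtain ⟨c, U, V, q, hc, hap, hlp, hq⟩ := ih lp' ap' hmem
      exact ⟨0 :: c, U, V, q, by simpa [Term.subtermAt] using hc, by simp [hap],
        by simp [hlp], hq⟩
  | app u v ihu ihv =>
      intro lp ap h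
      simp only [Term.gr, List.mem_append] at h
      rcases h with (h | h) | h
      · -- the head generalized redex
        cases hL : Term.lamListPos u with
        | nil => rw [hL] at h; simp at h
        | cons q rest =>
            rw [hL] at h
            simp only [List.mem_singleton] at h
            injection h with h1 h2
            subst h1; subst h2
            exact ⟨[], u, v, q, by simp [Term.subtermAt], rfl, rfl, by simp [hL]⟩
      · simp only [List.mem_map] at h
        obtain ⟨⟨lp', ap'⟩, hmem, heq⟩ := h
        injection heq with h1 h2
        subst h1; subst h2
        obtain ⟨c, U, V, q, hc, hap, hlp, hq⟩ := ihu lp' ap' hmem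
        exact ⟨0 :: c, U, V, q, by simpa [Term.subtermAt] using hc, by simp [hap],
          by simp [hlp], hq⟩
      · simp only [List.mem_map] at h
        obtain ⟨⟨lp', ap'⟩, hmem, heq⟩ := h
        injection heq with h1 h2
        subst h1; subst h2
        obtain ⟨c, U, V, q, hc, hap, hlp, hq⟩ := ihv lp' ap' hmem
        exact ⟨1 :: c, U, V, q, by simpa [Term.subtermAt] using hc, by simp [hap],
          by simp [hlp], hq⟩

theorem binderAux_spec : ∀ (t : Term) (p cur : Pos) (env : List (Name × Pos)) (lp : Pos),
    Term.binderAux t p cur env = some lp →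
    ∃ x, Term.subtermAt t p = some (.var x) ∧
      ((∃ q b p₀, Term.subtermAt t q = some (.lam x b) ∧ p = q ++ 0 :: p₀ ∧ lp = cur ++ q)
       ∨ env.lookup x = some lp) := by
  intro t
  induction t with
  | var z =>
      intro p cur env lp h
      cases p with
      | nil =>
          simp only [Term.binderAux] at h
          exact ⟨z, by simp [Term.subtermAt], Or.inr h⟩
      | cons i p => simp [Term.binderAux] at h
  | lam y u ih =>
      intro p cur env lp h
      cases p with
      | nil => simp [Term.binderAux] at h
      | cons i p =>
          match i with
          | 0 =>
              simp only [Term.binderAux] at h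
              obtain ⟨x, hvar, hd⟩ := ih p (cur ++ [0]) ((y, cur) :: env) lp h
              refine ⟨x, by simpa [Term.subtermAt] using hvar, ?_⟩
              rcases hd with ⟨q, b, p₀, hq, hp, hlp⟩ | henv
              · exact Or.inl ⟨0 :: q, b, p₀, by simpa [Term.subtermAt] using hq,
                  by simp [hp], by simp [hlp]⟩
              · by_cases hxy : y = x
                · subst hxy
                  simp only [List.lookup_cons_self] at henv
                  injection henv with henv
                  exact Or.inl ⟨[], u, p, by simp [Term.subtermAt], by simp,
                    by simp [henv]⟩
                · rw [List.lookup_cons] at henv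
                  rw [show (x == y) = false from
                    beq_false_of_ne (fun hc => hxy hc.symm)] at henv
                  exact Or.inr henv
          | i + 1 => simp [Term.binderAux] at h
  | app u v ihu ihv =>
      intro p cur env lp h
      cases p with
      | nil => simp [Term.binderAux] at h
      | cons i p =>
          match i with
          | 0 =>
              simp only [Term.binderAux] at h
              obtain ⟨x, hvar, hd⟩ := ihu p (cur ++ [0]) env lp h
              refine ⟨x, by simpa [Term.subtermAt] using hvar, ?_⟩
              rcases hd with ⟨q, b, p₀, hq, hp, hlp⟩ | henv
              · exact Or.inl ⟨0 :: q, b, p₀, by simpa [Term.subtermAt] using hq,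
                  by simp [hp], by simp [hlp]⟩
              · exact Or.inr henv
          | 1 =>
              simp only [Term.binderAux] at h
              obtain ⟨x, hvar, hd⟩ := ihv p (cur ++ [1]) env lp h
              refine ⟨x, by simpa [Term.subtermAt] using hvar, ?_⟩
              rcases hd with ⟨q, b, p₀, hq, hp, hlp⟩ | henv
              · exact Or.inl ⟨1 :: q, b, p₀, by simpa [Term.subtermAt] using hq,
                  by simp [hp], by simp [hlp]⟩
              · exact Or.inr henv
          | i + 2 => simp [Term.binderAux] at h
/-! ### Barendregt freshness at an application node -/

theorem bv (M : Term) (hB : Barendregt M) {c : Pos} {U V : Term}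
    (hc : Term.subtermAt M c = some (.app U V)) :
    ∀ y, (y ∈ U.bndrs ∨ y ∈ V.bndrs) → y ∉ U.fv ∧ y ∉ V.fv := by
  obtain ⟨hnodup, hfree⟩ := hB
  have hcle : ∀ z, M.bndrs.count z ≤ 1 := fun z =>
    List.nodup_iff_count_le_one.mp hnodup z
  have key : ∀ (ε : Nat) (S : Term), Term.subtermAt M (c ++ [ε]) = some S →
      ∀ y, (y ∈ U.bndrs ∨ y ∈ V.bndrs) → y ∉ S.fv := by
    intro ε S hS y hy hyfv
    have hyUV : y ∈ (Term.app U V).bndrs := by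
      simp only [Term.bndrs, List.mem_append]; exact hy
    have hyM : y ∈ M.bndrs := mem_bndrs_subterm hc hyUV
    rcases fv_subterm hS hyfv with hfv | ⟨r1, r2, b1, hr, hb1⟩
    · exact hfree y hyM hfv
    · have hsplit : ∃ r2', c = r1 ++ 0 :: r2' := by
        rcases List.eq_nil_or_concat r2 with rfl | ⟨r2', j, rfl⟩
        · exfalso
          have h1 : c = r1 ∧ [ε] = [0] :=
            List.append_inj' hr (by simp)
          rw [h1.1, hb1] at hc
          simp at hc
        · have h2 : c ++ [ε] = (r1 ++ 0 :: r2') ++ [j] := by simp [hr]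
          have h3 : c = r1 ++ 0 :: r2' ∧ [ε] = [j] :=
            List.append_inj' h2 (by simp)
          exact ⟨r2', h3.1⟩
      obtain ⟨r2', rfl⟩ := hsplit
      have hUV : Term.subtermAt b1 r2' = some (.app U V) := by
        have h4 := subtermAt_append hb1 (0 :: r2')
        rw [hc] at h4
        simpa [Term.subtermAt] using h4.symm
      have h5 : 1 ≤ b1.bndrs.count y :=
        List.count_pos_iff.mpr (mem_bndrs_subterm hUV hyUV)
      have h6 := count_bndrs_subterm hb1 y
      simp only [Term.bndrs, List.count_cons_self] at h6
      have := hcle y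
      omega
  have hU := subtermAt_append hc [0]
  have hV := subtermAt_append hc [1]
  simp only [Term.subtermAt] at hU hV
  intro y hy
  exact ⟨key 0 U hU y hy, key 1 V hV y hy⟩

/-! ### from β-steps to β-equivalence -/

theorem star_eqv {a b : Term} (h : BetaStar a b) : BetaEq a b := by
  induction h with
  | refl => exact Relation.EqvGen.refl a
  | tail _ hs ih =>
      exact Relation.EqvGen.trans _ _ _ ih (Relation.EqvGen.rel _ _ (Or.inl hs))

theorem linstep_sound_aux (M N : Term) (h : LinStep M N) : BetaEq M N := by
  obtain ⟨M', hMα, hB, p, lp, ap, A, _hlloc, hbind, hgr, hsubA, hNα⟩ := h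
  obtain ⟨c, U, V, q, hc, hap, hlp, hq⟩ := gr_spec M' lp ap hgr
  obtain ⟨x, hvarP, hd⟩ := binderAux_spec M' p [] [] lp hbind
  rcases hd with ⟨qb, b, p₀, hqb, hp, hlpq⟩ | henv
  · simp only [List.nil_append] at hlpq
    subst hlpq
    -- identify A with V
    have hAV : V = A := by
      rw [hap] at hsubA
      rw [subtermAt_append hc [1]] at hsubA
      simpa [Term.subtermAt] using hsubA
    subst hAV
    -- the λ-abstraction inside U
    have hUq : Term.subtermAt U q = some (.lam x b) := by
      rw [hlp] at hqb
      rw [subtermAt_append hc (0 :: q)] at hqb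
      simpa [Term.subtermAt] using hqb
    -- the variable occurrence inside U
    have hpc : p = c ++ (0 :: (q ++ 0 :: p₀)) := by
      rw [hp, hlp]; simp
    have hvarU : Term.subtermAt U (q ++ 0 :: p₀) = some (.var x) := by
      rw [hpc, subtermAt_append hc (0 :: (q ++ 0 :: p₀))] at hvarP
      simpa [Term.subtermAt] using hvarP
    -- counting binders
    have hxM : x ∈ M'.bndrs :=
      mem_bndrs_subterm hqb (by simp [Term.bndrs])
    have hcM : M'.bndrs.count x = 1 :=
      le_antisymm (List.nodup_iff_count_le_one.mp hB.1 x) (List.count_pos_iff.mpr hxM)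
    have hcapp : (Term.app U V).bndrs.count x ≤ 1 := by
      have := count_bndrs_subterm hc x; omega
    have hxU : x ∈ U.bndrs := mem_bndrs_subterm hUq (by simp [Term.bndrs])
    have hcU1 : 1 ≤ U.bndrs.count x := List.count_pos_iff.mpr hxU
    simp only [Term.bndrs, List.count_append] at hcapp
    have hcU : U.bndrs.count x = 1 := by omega
    have hxV : x ∉ V.bndrs := by
      intro hcm
      have := List.count_pos_iff.mpr hcm
      omega
    -- the freshness invariant
    have hbv := bv M' hB hc
    -- fire the generalized redex on both sides
    obtain ⟨r, h1, h2⟩ := main q U [V] V x p₀ (by simp)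
      (by simpa using hq) ⟨b, hUq⟩ hvarU hcU
      (by intro a ha; simp only [List.mem_singleton] at ha; subst ha; exact hxV)
      (by
        intro y hy
        have hy' : y ∈ U.bndrs ∨ y ∈ V.bndrs := by
          rcases hy with hy | ⟨a, ha, hya⟩
          · exact Or.inl hy
          · simp only [List.mem_singleton] at ha; subst ha; exact Or.inr hya
        obtain ⟨hU, hV⟩ := hbv y hy'
        refine ⟨hU, ?_⟩
        intro a ha
        simp only [List.mem_singleton] at ha; subst ha; exact hV)
    have hst1 : BetaStar (Term.app U V) r := fires_star h1
    have hst2 : BetaStar (Term.app (Term.replaceAt U (q ++ 0 :: p₀) V) V) r :=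
      fires_star h2
    -- lift through the context at position c
    have hS1 : BetaStar M' (Term.replaceAt M' c r) := star_replace hst1 c M' hc
    have hNdef : Term.replaceAt M' p V =
        Term.replaceAt M' c (Term.app (Term.replaceAt U (q ++ 0 :: p₀) V) V) := by
      rw [hpc, replaceAt_append hc (0 :: (q ++ 0 :: p₀)) V]
      rfl
    have hsubN : Term.subtermAt
        (Term.replaceAt M' c (Term.app (Term.replaceAt U (q ++ 0 :: p₀) V) V)) c =
        some (Term.app (Term.replaceAt U (q ++ 0 :: p₀) V) V) :=
      subtermAt_replaceAt hc _
    have hS2 : BetaStar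
        (Term.replaceAt M' c (Term.app (Term.replaceAt U (q ++ 0 :: p₀) V) V))
        (Term.replaceAt M' c r) := by
      have hh := star_replace hst2 c _ hsubN
      rwa [replaceAt_replaceAt hc _ r] at hh
    -- assemble the β-equivalence
    refine Relation.EqvGen.trans _ _ _ (Relation.EqvGen.rel _ _ (Or.inr hMα)) ?_
    refine Relation.EqvGen.trans _ _ _ (star_eqv hS1) ?_
    refine Relation.EqvGen.trans _ _ _ (Relation.EqvGen.symm _ _ (star_eqv hS2)) ?_
    exact Relation.EqvGen.symm _ _ (Relation.EqvGen.rel _ _ (Or.inr (hNdef ▸ hNα)))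
  · simp [List.lookup] at henv

end Aux
end ULC

namespace Stmt13
open ULC

/-- **Soundness of leftmost linear reduction.**
If `M →_ll N` then `M` and `N` are β-equivalent. -/
theorem linstep_sound (M N : Term) (h : LinStep M N) : BetaEq M N :=
  ULC.Aux.linstep_sound_aux M N h

end Stmt13
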